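/- Let K ⊆ ℝⁿ be nonempty, compact, and convex, and F : ℝⁿ → ℝⁿ continuously differentiable and monotone on K, with SOL(K,F) nonempty. Let x : [0, ∞) → ℝⁿ be locally Lipschitz with x(t) ∈ K for all t ≥ 0, such that for almost every t ≥ 0 there exists b(t) ∈ argmin_{y∈K} ⟨y, F(x(t))⟩ with x′(t) = b(t) − x(t). Then dist(x(t), SOL(K,F)) → 0 as t → ∞. -/

import Mathlib

open scoped InnerProductSpace
open MeasureTheory

section auxiliary_lemmas
open Set Filter

/-- A locally Lipschitz function is Lipschitz (with some real constant) on any compact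
interval. -/
lemma locallyLipschitz_exists_lip_Icc {X : Type*} [MetricSpace X] {f : ℝ → X}
    (h : LocallyLipschitz f) (a b : ℝ) :
    ∃ C : ℝ, 0 ≤ C ∧ ∀ s ∈ Set.Icc a b, ∀ t ∈ Set.Icc a b,
      dist (f s) (f t) ≤ C * dist s t := by
  rcases le_or_gt b a with hba | hab
  · -- degenerate: interval has at most one point
    refine ⟨0, le_rfl, fun s hs t ht => ?_⟩
    have hst : s = t := le_antisymm (hs.2.trans (hba.trans ht.1)) (ht.2.trans (hba.trans hs.1))
    simp [hst]
  -- main case a < b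
  set P : ℝ → Prop := fun c => ∃ C : ℝ, 0 ≤ C ∧ ∀ s ∈ Set.Icc a c, ∀ t ∈ Set.Icc a c,
      s ≤ t → dist (f s) (f t) ≤ C * (t - s) with hP
  have glue : ∀ m c : ℝ, ∀ C₁ C₂ : ℝ, 0 ≤ C₁ → 0 ≤ C₂ →
      (∀ s ∈ Set.Icc a m, ∀ t ∈ Set.Icc a m, s ≤ t → dist (f s) (f t) ≤ C₁ * (t - s)) →
      (∀ s ∈ Set.Icc m c, ∀ t ∈ Set.Icc m c, s ≤ t → dist (f s) (f t) ≤ C₂ * (t - s)) →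
      P c := by
    intro m c C₁ C₂ hC₁ hC₂ h₁ h₂
    rcases le_or_gt c m with hcm | hmc
    · exact ⟨C₁, hC₁, fun s hs t ht hst =>
        h₁ s ⟨hs.1, hs.2.trans hcm⟩ t ⟨ht.1, ht.2.trans hcm⟩ hst⟩
    rcases le_or_gt m a with hma | ham
    · exact ⟨C₂, hC₂, fun s hs t ht hst =>
        h₂ s ⟨hma.trans hs.1, hs.2⟩ t ⟨hma.trans ht.1, ht.2⟩ hst⟩
    refine ⟨C₁ + C₂, by linarith, fun s hs t ht hst => ?_⟩
    rcases le_or_gt t m with htm | hmt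
    · calc dist (f s) (f t) ≤ C₁ * (t - s) := h₁ s ⟨hs.1, hst.trans htm⟩ t ⟨ht.1, htm⟩ hst
        _ ≤ (C₁ + C₂) * (t - s) := by nlinarith
    rcases le_or_gt m s with hms | hsm
    · calc dist (f s) (f t) ≤ C₂ * (t - s) := h₂ s ⟨hms, hs.2⟩ t ⟨hms.trans hst, ht.2⟩ hst
        _ ≤ (C₁ + C₂) * (t - s) := by nlinarith
    · calc dist (f s) (f t) ≤ dist (f s) (f m) + dist (f m) (f t) := dist_triangle _ _ _
        _ ≤ C₁ * (m - s) + C₂ * (t - m) := by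
            gcongr
            · exact h₁ s ⟨hs.1, hsm.le⟩ m ⟨ham.le, le_rfl⟩ hsm.le
            · exact h₂ m ⟨le_rfl, hmt.le.trans ht.2⟩ t ⟨hmt.le, ht.2⟩ hmt.le
        _ ≤ (C₁ + C₂) * (t - s) := by nlinarith
  set S : Set ℝ := {c ∈ Set.Icc a b | P c} with hS
  have haS : a ∈ S := by
    refine ⟨⟨le_rfl, hab.le⟩, 0, le_rfl, fun s hs t ht hst => ?_⟩
    have : s = t := le_antisymm hst (ht.2.trans hs.1)
    simp [this]
  have hSb : BddAbove S := ⟨b, fun c hc => hc.1.2⟩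
  have hSne : S.Nonempty := ⟨a, haS⟩
  set c := sSup S with hc
  have hcI : c ∈ Set.Icc a b := ⟨le_csSup hSb haS, csSup_le hSne fun y hy => hy.1.2⟩
  -- local Lipschitz at c
  obtain ⟨Kc, U, hU, hKc⟩ := h c
  obtain ⟨ε, hε, hball⟩ := Metric.mem_nhds_iff.1 hU
  -- a point of S close to c
  obtain ⟨c', hc'S, hc'⟩ : ∃ c' ∈ S, c - ε / 2 < c' := by
    rcases exists_lt_of_lt_csSup hSne (show c - ε / 2 < c by linarith) with ⟨c', h1, h2⟩
    exact ⟨c', h1, h2⟩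
  obtain ⟨C₁, hC₁, h₁⟩ := hc'S.2
  have hc'le : c' ≤ c := le_csSup hSb hc'S
  set m := min b (c + ε / 2) with hm
  have hmS : m ∈ S := by
    have hmI : m ∈ Set.Icc a b := ⟨le_min hab.le (by linarith [hcI.1, hε]), min_le_left _ _⟩
    refine ⟨hmI, glue c' m C₁ Kc hC₁ Kc.2 h₁ ?_⟩
    intro s hs t ht hst
    have hsub : Set.Icc c' m ⊆ U := by
      intro p hp
      apply hball
      have h1 : c - ε / 2 < p := lt_of_lt_of_le hc' hp.1
      have h2 : p ≤ c + ε / 2 := hp.2.trans (min_le_right _ _)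
      simp only [Metric.mem_ball, Real.dist_eq, abs_sub_lt_iff]
      constructor <;> linarith
    have := hKc.dist_le_mul s (hsub hs) t (hsub ht)
    calc dist (f s) (f t) ≤ Kc * dist s t := this
      _ = Kc * (t - s) := by rw [Real.dist_eq, abs_sub_comm, abs_of_nonneg (by linarith)]
  have hmc : m ≤ c := le_csSup hSb hmS
  have hcb : c = b := by
    by_contra hne
    have : c < b := lt_of_le_of_ne hcI.2 hne
    have : c < m := lt_min this (by linarith)
    linarith
  have hbS : b ∈ S := by
    have : m = b := by rw [hm, hcb]; exact min_eq_left (by linarith)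
    rwa [← this]
  obtain ⟨C, hC, hCl⟩ := hbS.2
  refine ⟨C, hC, fun s hs t ht => ?_⟩
  rcases le_total s t with hst | hts
  · have := hCl s hs t ht hst
    rwa [Real.dist_eq, abs_sub_comm, abs_of_nonneg (by linarith)]
  · have := hCl t ht s hs hts
    rw [dist_comm, Real.dist_eq, abs_of_nonneg (by linarith : (0:ℝ) ≤ s - t)]
    exact this

/-- A Lipschitz real function whose derivative is a.e. nonpositive on `(a,b)` is
nonincreasing from `a` to `b`. -/
lemma lipschitz_nonincreasing_of_deriv_ae_nonpos {f : ℝ → ℝ} {L : NNReal}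
    (hf : LipschitzWith L f) {a b : ℝ} (hab : a ≤ b)
    (hd : ∀ᵐ t ∂(volume : Measure ℝ), t ∈ Set.Ioo a b → deriv f t ≤ 0) :
    f b ≤ f a := by
  rcases eq_or_lt_of_le hab with rfl | hab
  · exact le_rfl
  have hfc : Continuous f := hf.continuous
  have key : ∀ f' : ℝ → ℝ, LipschitzWith L f' →
      Monotone (fun t => (L : ℝ) * t + f' t) := by
    intro f' hf' s t hst
    have := hf'.dist_le_mul s t
    rw [Real.dist_eq, Real.dist_eq] at this
    have h1 : |f' s - f' t| ≤ L * |s - t| := this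
    have h2 : |s - t| = t - s := by rw [abs_sub_comm]; exact abs_of_nonneg (by linarith)
    rw [h2] at h1
    have := abs_le.1 h1
    simp only [] 
    nlinarith [this.1, this.2]
  have hg₁ : Monotone (fun t => (L : ℝ) * t + f t) := key f hf
  have hg₂ : Monotone (fun t => (L : ℝ) * t + (-f) t) := key (-f) hf.neg
  set g₁ : ℝ → ℝ := fun t => (L : ℝ) * t + f t with hg₁def
  set g₂ : ℝ → ℝ := fun t => (L : ℝ) * t + (-f) t with hg₂def
  -- the Stieltjes functions agree with g₁, g₂ by continuity
  have hst₁ : ∀ t, hg₁.stieltjesFunction t = g₁ t := by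
    intro t
    rw [hg₁.stieltjesFunction_eq]
    refine rightLim_eq_of_tendsto ?_
    exact ((continuous_const.mul continuous_id).add hfc).continuousAt.tendsto.mono_left
      nhdsWithin_le_nhds
  have hst₂ : ∀ t, hg₂.stieltjesFunction t = g₂ t := by
    intro t
    rw [hg₂.stieltjesFunction_eq]
    refine rightLim_eq_of_tendsto ?_
    exact ((continuous_const.mul continuous_id).add hfc.neg).continuousAt.tendsto.mono_left
      nhdsWithin_le_nhds
  set μ₁ := hg₁.stieltjesFunction.measure with hμ₁
  set μ₂ := hg₂.stieltjesFunction.measure with hμ₂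
  have hIoc : ∀ c d : ℝ, c ≤ d → μ₁ (Set.Ioc c d) = ENNReal.ofReal (g₁ d - g₁ c) := by
    intro c d _; rw [hμ₁, StieltjesFunction.measure_Ioc, hst₁, hst₁]
  have hIoc₂ : ∀ c d : ℝ, c ≤ d → μ₂ (Set.Ioc c d) = ENNReal.ofReal (g₂ d - g₂ c) := by
    intro c d _; rw [hμ₂, StieltjesFunction.measure_Ioc, hst₂, hst₂]
  -- μ₁ + μ₂ = 2L • volume
  have hsum : μ₁ + μ₂ = (ENNReal.ofReal (2 * L)) • (volume : Measure ℝ) := by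
    refine MeasureTheory.Measure.ext_of_Ioc' _ _ (fun c d hcd => ?_) (fun c d hcd => ?_)
    · rw [Measure.add_apply, hIoc c d hcd.le, hIoc₂ c d hcd.le]
      exact ENNReal.add_ne_top.2 ⟨ENNReal.ofReal_ne_top, ENNReal.ofReal_ne_top⟩
    rw [Measure.add_apply, hIoc c d hcd.le, hIoc₂ c d hcd.le, Measure.smul_apply,
      Real.volume_Ioc, smul_eq_mul, ← ENNReal.ofReal_mul (by positivity),
      ← ENNReal.ofReal_add (by linarith [hg₁ hcd.le] : (0:ℝ) ≤ g₁ d - g₁ c)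
      (by linarith [hg₂ hcd.le] : (0:ℝ) ≤ g₂ d - g₂ c)]
    congr 1
    simp only [hg₁def, hg₂def, Pi.neg_apply]
    ring
  have hac : μ₁ ≪ (volume : Measure ℝ) := by
    intro s hs
    have h0 : (μ₁ + μ₂) s = 0 := by rw [hsum, Measure.smul_apply, hs]; simp
    rw [Measure.add_apply] at h0
    exact (add_eq_zero.1 h0).1
  have hrep : (volume : Measure ℝ).withDensity (μ₁.rnDeriv volume) = μ₁ :=
    Measure.withDensity_rnDeriv_eq _ _ hac
  -- a.e. bound on the density on Ioo a b
  have hbd : ∀ᵐ t ∂(volume : Measure ℝ),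
      t ∈ Set.Ioo a b → μ₁.rnDeriv volume t ≤ ENNReal.ofReal L := by
    filter_upwards [hg₁.ae_hasDerivAt, hd, Measure.rnDeriv_lt_top μ₁ volume]
      with t hder hd' hlt ht
    have hfd : HasDerivAt f ((μ₁.rnDeriv volume t).toReal - L) t := by
      have : HasDerivAt (fun s => g₁ s - (L : ℝ) * s) ((μ₁.rnDeriv volume t).toReal - L) t := by
        exact (hder.sub ((hasDerivAt_id' t).const_mul (L : ℝ))).congr_deriv (by simp; rfl)
      convert this using 1
      funext s
      simp [hg₁def]
    have : deriv f t = (μ₁.rnDeriv volume t).toReal - L := hfd.deriv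
    have h1 : (μ₁.rnDeriv volume t).toReal ≤ L := by
      have := hd' ht
      rw [hfd.deriv] at this  
      linarith
    rw [← ENNReal.ofReal_toReal hlt.ne]
    exact ENNReal.ofReal_le_ofReal h1
  -- compute μ₁ (Ioo a b)
  have hμb : μ₁ {b} = 0 := hac (by simp)
  have h1 : μ₁ (Set.Ioc a b) = μ₁ (Set.Ioo a b) := by
    apply le_antisymm
    · rw [← Set.Ioo_union_Icc_eq_Ioc hab le_rfl, Set.Icc_self]
      refine (measure_union_le _ _).trans ?_
      rw [hμb, add_zero]
    · exact measure_mono Set.Ioo_subset_Ioc_self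
  have h2 : μ₁ (Set.Ioo a b) ≤ ENNReal.ofReal L * ENNReal.ofReal (b - a) := by
    rw [← hrep, withDensity_apply _ measurableSet_Ioo]
    calc ∫⁻ t in Set.Ioo a b, μ₁.rnDeriv volume t ∂volume
        ≤ ∫⁻ _ in Set.Ioo a b, ENNReal.ofReal L ∂volume := by
          refine lintegral_mono_ae ?_
          exact (ae_restrict_iff' measurableSet_Ioo).2 hbd
      _ = ENNReal.ofReal L * ENNReal.ofReal (b - a) := by
          rw [setLIntegral_const, Real.volume_Ioo]
  have h3 : ENNReal.ofReal (g₁ b - g₁ a) ≤ ENNReal.ofReal ((L : ℝ) * (b - a)) := by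
    calc ENNReal.ofReal (g₁ b - g₁ a) = μ₁ (Set.Ioc a b) := (hIoc a b hab.le).symm
      _ = μ₁ (Set.Ioo a b) := h1
      _ ≤ ENNReal.ofReal L * ENNReal.ofReal (b - a) := h2
      _ = ENNReal.ofReal ((L : ℝ) * (b - a)) := (ENNReal.ofReal_mul L.coe_nonneg).symm
  have h4 : g₁ b - g₁ a ≤ (L : ℝ) * (b - a) := by
    have := (ENNReal.ofReal_le_ofReal_iff
      (mul_nonneg L.coe_nonneg (by linarith))).1 h3
    rcases le_or_gt (g₁ b - g₁ a) 0 with h | h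
    · nlinarith
    · exact this
  simp only [hg₁def] at h4
  linarith

lemma aux_psd {n : ℕ} {K : Set (EuclideanSpace ℝ (Fin n))} (hKconv : Convex ℝ K)
    {F : EuclideanSpace ℝ (Fin n) → EuclideanSpace ℝ (Fin n)} (hF : ContDiff ℝ 1 F)
    (hmono : ∀ u ∈ K, ∀ v ∈ K, 0 ≤ ⟪u - v, F u - F v⟫_ℝ)
    {u v : EuclideanSpace ℝ (Fin n)} (hu : u ∈ K) (hv : v ∈ K) :
    0 ≤ ⟪v - u, fderiv ℝ F u (v - u)⟫_ℝ := by
  set w := v - u with hw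
  set γ : ℝ → EuclideanSpace ℝ (Fin n) := fun s => F (u + s • w) with hγ
  have hpath : HasDerivAt (fun s : ℝ => u + s • w) w 0 := by
    simpa using (((hasDerivAt_id (0:ℝ)).smul_const w).const_add u)
  have hcomp : HasDerivAt γ (fderiv ℝ F u w) 0 := by
    have h0 : HasFDerivAt F (fderiv ℝ F u) (u + (0:ℝ) • w) := by
      simpa using (hF.differentiable one_ne_zero u).hasFDerivAt
    have := h0.comp_hasDerivAt 0 hpath
    exact this
  have hslope : Tendsto (slope γ 0) (nhdsWithin 0 (Set.Ioi (0:ℝ)))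
      (nhds (fderiv ℝ F u w)) :=
    (hasDerivAt_iff_tendsto_slope.1 hcomp).mono_left
      (nhdsWithin_mono _ (fun y hy => ne_of_gt hy))
  have hlim : Tendsto (fun s => ⟪w, slope γ 0 s⟫_ℝ) (nhdsWithin 0 (Set.Ioi (0:ℝ)))
      (nhds ⟪w, fderiv ℝ F u w⟫_ℝ) :=
    tendsto_const_nhds.inner hslope
  have hev : ∀ᶠ s in nhdsWithin 0 (Set.Ioi (0:ℝ)), 0 ≤ ⟪w, slope γ 0 s⟫_ℝ := by
    filter_upwards [Ioc_mem_nhdsGT_of_mem (Set.left_mem_Ico.2 zero_lt_one)] with s hs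
    have hs0 : 0 < s := hs.1
    have hp : u + s • w ∈ K := by
      have : (1 - s) • u + s • v ∈ K :=
        hKconv hu hv (by linarith [hs.2]) hs0.le (by ring)
      convert this using 1
      rw [hw]
      rw [sub_smul, one_smul, smul_sub]
      abel
    have hm := hmono _ hp _ hu
    have hsub : u + s • w - u = s • w := by abel
    rw [hsub, real_inner_smul_left] at hm
    have hw0 : 0 ≤ ⟪w, F (u + s • w) - F u⟫_ℝ := nonneg_of_mul_nonneg_right hm hs0
    have : slope γ 0 s = s⁻¹ • (F (u + s • w) - F u) := by
      rw [slope_def_module]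
      simp [hγ]
    rw [this, real_inner_smul_right]
    positivity
  exact ge_of_tendsto hlim hev

end auxiliary_lemmas

set_option maxHeartbeats 1000000 in
/-- Convergence of best response dynamics to the solution set of the
variational inequality: for `K` nonempty compact convex, `F` continuously differentiable
and monotone on `K` with `SOL(K,F)` nonempty, any locally Lipschitz trajectory staying in
`K` and satisfying the best response dynamics a.e. has `dist(x(t), SOL(K,F)) → 0`. -/
theorem stmt_6 {n : ℕ} (K : Set (EuclideanSpace ℝ (Fin n)))
    (hKne : K.Nonempty) (hKcpt : IsCompact K) (hKconv : Convex ℝ K)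
    (F : EuclideanSpace ℝ (Fin n) → EuclideanSpace ℝ (Fin n))
    (hF : ContDiff ℝ 1 F)
    (hmono : ∀ u ∈ K, ∀ v ∈ K, 0 ≤ ⟪u - v, F u - F v⟫_ℝ)
    (SOL : Set (EuclideanSpace ℝ (Fin n)))
    (hSOL : SOL = {z | z ∈ K ∧ ∀ y ∈ K, 0 ≤ ⟪y - z, F z⟫_ℝ})
    (hSOLne : SOL.Nonempty)
    (x : ℝ → EuclideanSpace ℝ (Fin n))
    (hlip : LocallyLipschitz x) (hxK : ∀ t ≥ (0:ℝ), x t ∈ K)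
    (hdyn : ∀ᵐ t ∂(volume.restrict (Set.Ici (0:ℝ))),
      ∃ b, (b ∈ K ∧ ∀ z ∈ K, ⟪b, F (x t)⟫_ℝ ≤ ⟪z, F (x t)⟫_ℝ) ∧
        HasDerivAt x (b - x t) t) :
    Filter.Tendsto (fun t => Metric.infDist (x t) SOL) Filter.atTop (nhds 0) := by
  classical
  -- bounds on K and F
  obtain ⟨R, hR0, hR⟩ : ∃ R : ℝ, 0 ≤ R ∧ ∀ y ∈ K, ‖y‖ ≤ R := by
    obtain ⟨R, hR⟩ := hKcpt.exists_bound_of_continuousOn continuousOn_id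
    exact ⟨max R 0, le_max_right _ _, fun y hy => (hR y hy).trans (le_max_left _ _)⟩
  obtain ⟨MF, hMF0, hMF⟩ : ∃ M : ℝ, 0 ≤ M ∧ ∀ u ∈ K, ‖F u‖ ≤ M := by
    obtain ⟨M, hM⟩ := hKcpt.exists_bound_of_continuousOn ((hF.continuous).continuousOn)
    exact ⟨max M 0, le_max_right _ _, fun u hu => (hM u hu).trans (le_max_left _ _)⟩
  obtain ⟨LF, hLF0, hLF⟩ : ∃ L : ℝ, 0 ≤ L ∧ ∀ u ∈ K, ∀ v ∈ K, ‖F u - F v‖ ≤ L * ‖u - v‖ := by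
    obtain ⟨L, hL⟩ := hKcpt.exists_bound_of_continuousOn
      ((hF.continuous_fderiv one_ne_zero).continuousOn)
    refine ⟨max L 0, le_max_right _ _, fun u hu v hv => ?_⟩
    exact hKconv.norm_image_sub_le_of_norm_fderiv_le
      (fun z _ => (hF.differentiable one_ne_zero).differentiableAt)
      (fun z hz => (hL z hz).trans (le_max_left _ _)) hv hu
  -- the value function and gap function
  set m : EuclideanSpace ℝ (Fin n) → ℝ :=
    fun u => sInf ((fun y => ⟪y, F u⟫_ℝ) '' K) with hmdef
  have hm_argmin : ∀ (u b : EuclideanSpace ℝ (Fin n)), b ∈ K →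
      (∀ z ∈ K, ⟪b, F u⟫_ℝ ≤ ⟪z, F u⟫_ℝ) → m u = ⟪b, F u⟫_ℝ := by
    intro u b hb hmin'
    exact IsLeast.csInf_eq ⟨⟨b, hb, rfl⟩, by rintro r ⟨z, hz, rfl⟩; exact hmin' z hz⟩
  have hmin : ∀ u : EuclideanSpace ℝ (Fin n), ∃ y ∈ K,
      (∀ z ∈ K, ⟪y, F u⟫_ℝ ≤ ⟪z, F u⟫_ℝ) ∧ m u = ⟪y, F u⟫_ℝ := by
    intro u
    have hcont : ContinuousOn (fun y : EuclideanSpace ℝ (Fin n) => ⟪y, F u⟫_ℝ) K :=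
      (Continuous.inner continuous_id continuous_const).continuousOn
    obtain ⟨y, hyK, hymin⟩ := hKcpt.exists_isMinOn hKne hcont
    exact ⟨y, hyK, fun z hz => hymin hz, hm_argmin u y hyK (fun z hz => hymin hz)⟩
  have hm_le : ∀ u : EuclideanSpace ℝ (Fin n), ∀ z ∈ K, m u ≤ ⟪z, F u⟫_ℝ := by
    intro u z hz
    obtain ⟨y, hyK, hymin, heq⟩ := hmin u
    rw [heq]; exact hymin z hz
  set g : EuclideanSpace ℝ (Fin n) → ℝ := fun u => ⟪u, F u⟫_ℝ - m u with hgdef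
  have hgK : ∀ u ∈ K, 0 ≤ g u := by
    intro u hu
    have := hm_le u u hu
    simp only [hgdef]; linarith
  have hg_sol : ∀ u ∈ K, g u = 0 → u ∈ SOL := by
    intro u hu hgu
    rw [hSOL]
    refine ⟨hu, fun y hy => ?_⟩
    have h1 : m u = ⟪u, F u⟫_ℝ := by simp only [hgdef] at hgu; linarith
    have h2 := hm_le u y hy
    rw [inner_sub_left]; linarith
  -- Lipschitz estimates for m and g on K
  have hm_lip : ∀ u ∈ K, ∀ v ∈ K, |m u - m v| ≤ R * (LF * ‖u - v‖) := by
    have key : ∀ u ∈ K, ∀ v ∈ K, m u - m v ≤ R * (LF * ‖u - v‖) := by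
      intro u hu v hv
      obtain ⟨yv, hyvK, hyvmin, heqv⟩ := hmin v
      have h1 : m u ≤ ⟪yv, F u⟫_ℝ := hm_le u yv hyvK
      have h2 : ⟪yv, F u⟫_ℝ - ⟪yv, F v⟫_ℝ = ⟪yv, F u - F v⟫_ℝ := by
        rw [inner_sub_right]
      have h3 : ⟪yv, F u - F v⟫_ℝ ≤ ‖yv‖ * ‖F u - F v‖ := real_inner_le_norm _ _
      have h4 : ‖yv‖ * ‖F u - F v‖ ≤ R * (LF * ‖u - v‖) := by
        have := hLF u hu v hv
        have := hR yv hyvK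
        nlinarith [norm_nonneg (F u - F v), norm_nonneg yv]
      rw [heqv]
      linarith
    intro u hu v hv
    rw [abs_sub_le_iff]
    constructor
    · exact key u hu v hv
    · have := key v hv u hu
      rwa [norm_sub_rev] at this
  set Cg : ℝ := MF + 2 * (R * LF) with hCgdef
  have hg_lip : ∀ u ∈ K, ∀ v ∈ K, |g u - g v| ≤ Cg * ‖u - v‖ := by
    intro u hu v hv
    have h1 : ⟪u, F u⟫_ℝ - ⟪v, F v⟫_ℝ = ⟪u - v, F u⟫_ℝ + ⟪v, F u - F v⟫_ℝ := by
      rw [inner_sub_left, inner_sub_right]; ring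
    have h2 : |⟪u - v, F u⟫_ℝ| ≤ ‖u - v‖ * MF := by
      have := abs_real_inner_le_norm (u - v) (F u)
      have := hMF u hu
      nlinarith [norm_nonneg (u - v)]
    have h3 : |⟪v, F u - F v⟫_ℝ| ≤ R * (LF * ‖u - v‖) := by
      have ha := abs_real_inner_le_norm v (F u - F v)
      have hb := hR v hv
      have hc := hLF u hu v hv
      nlinarith [norm_nonneg (F u - F v), norm_nonneg v, norm_nonneg (u - v)]
    have h4 := hm_lip u hu v hv
    simp only [hgdef, hCgdef]
    have habs : |(⟪u, F u⟫_ℝ - m u) - (⟪v, F v⟫_ℝ - m v)| ≤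
        |⟪u - v, F u⟫_ℝ| + |⟪v, F u - F v⟫_ℝ| + |m u - m v| := by
      rw [show (⟪u, F u⟫_ℝ - m u) - (⟪v, F v⟫_ℝ - m v)
          = (⟪u - v, F u⟫_ℝ + ⟪v, F u - F v⟫_ℝ) + -(m u - m v) by rw [← h1]; ring]
      calc |(⟪u - v, F u⟫_ℝ + ⟪v, F u - F v⟫_ℝ) + -(m u - m v)|
          ≤ |⟪u - v, F u⟫_ℝ + ⟪v, F u - F v⟫_ℝ| + |-(m u - m v)| := abs_add_le _ _
        _ ≤ |⟪u - v, F u⟫_ℝ| + |⟪v, F u - F v⟫_ℝ| + |m u - m v| := by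
            rw [abs_neg]
            have := abs_add_le ⟪u - v, F u⟫_ℝ ⟪v, F u - F v⟫_ℝ
            linarith
    calc |(⟪u, F u⟫_ℝ - m u) - (⟪v, F v⟫_ℝ - m v)|
        ≤ |⟪u - v, F u⟫_ℝ| + |⟪v, F u - F v⟫_ℝ| + |m u - m v| := habs
      _ ≤ ‖u - v‖ * MF + R * (LF * ‖u - v‖) + R * (LF * ‖u - v‖) := by linarith
      _ = (MF + 2 * (R * LF)) * ‖u - v‖ := by ring
  have hCg0 : 0 ≤ Cg := by simp only [hCgdef]; nlinarith
  have hg_cont : ContinuousOn g K := by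
    refine Metric.continuousOn_iff.2 fun u hu ε hε => ?_
    refine ⟨ε / (Cg + 1), by positivity, fun v hv hdist => ?_⟩
    have h1 := hg_lip v hv u hu
    have h2 : ‖v - u‖ = dist v u := (dist_eq_norm _ _).symm
    rw [Real.dist_eq]
    calc |g v - g u| ≤ Cg * ‖v - u‖ := h1
      _ = Cg * dist v u := by rw [h2]
      _ < ε := by
          have hδ : (Cg + 1) * (ε / (Cg + 1)) = ε := by field_simp
          have h5 : Cg * dist v u ≤ Cg * (ε / (Cg + 1)) :=
            mul_le_mul_of_nonneg_left hdist.le hCg0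
          nlinarith [dist_nonneg (x := v) (y := u), hε]
  obtain ⟨Gb, hGb0, hGb⟩ : ∃ Gb : ℝ, 0 ≤ Gb ∧ ∀ u ∈ K, |g u| ≤ Gb := by
    obtain ⟨Gb, hGb⟩ := hKcpt.exists_bound_of_continuousOn hg_cont
    exact ⟨max Gb 0, le_max_right _ _, fun u hu => (hGb u hu).trans (le_max_left _ _)⟩
  -- derivative bound for the Lyapunov function V = g ∘ x
  have hderiv_bound : ∀ t : ℝ, 0 ≤ t →
      (∃ b, (b ∈ K ∧ ∀ z ∈ K, ⟪b, F (x t)⟫_ℝ ≤ ⟪z, F (x t)⟫_ℝ) ∧ HasDerivAt x (b - x t) t) →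
      DifferentiableAt ℝ (fun s => g (x s)) t →
      deriv (fun s => g (x s)) t ≤ - g (x t) := by
    intro t ht hb hdiff
    obtain ⟨b, ⟨hbK, hbmin⟩, hx⟩ := hb
    set A := fderiv ℝ F (x t) with hA
    have hxF : HasDerivAt (fun s => F (x s)) (A (b - x t)) t :=
      ((hF.differentiable one_ne_zero (x t)).hasFDerivAt).comp_hasDerivAt t hx
    set φ : ℝ → ℝ := fun s => ⟪x s - b, F (x s)⟫_ℝ with hφdef
    have hφd : HasDerivAt φ (⟪x t - b, A (b - x t)⟫_ℝ + ⟪b - x t, F (x t)⟫_ℝ) t :=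
      HasDerivAt.inner ℝ (hx.sub_const b) hxF
    have hmt : m (x t) = ⟪b, F (x t)⟫_ℝ := hm_argmin _ b hbK hbmin
    have hVt : g (x t) = φ t := by
      simp only [hgdef, hφdef, inner_sub_left]
      rw [hmt]
    have hVge : ∀ s, φ s ≤ g (x s) := by
      intro s
      have h1 := hm_le (x s) b hbK
      simp only [hgdef, hφdef, inner_sub_left]
      linarith
    have htd : Filter.Tendsto (slope (fun s => g (x s)) t) (nhdsWithin t (Set.Iio t))
        (nhds (deriv (fun s => g (x s)) t)) :=
      (hasDerivAt_iff_tendsto_slope.1 hdiff.hasDerivAt).mono_left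
        (nhdsWithin_mono _ fun y hy => ne_of_lt hy)
    have hφtd : Filter.Tendsto (slope φ t) (nhdsWithin t (Set.Iio t))
        (nhds (⟪x t - b, A (b - x t)⟫_ℝ + ⟪b - x t, F (x t)⟫_ℝ)) :=
      (hasDerivAt_iff_tendsto_slope.1 hφd).mono_left
        (nhdsWithin_mono _ fun y hy => ne_of_lt hy)
    have hle : ∀ᶠ s in nhdsWithin t (Set.Iio t),
        slope (fun s => g (x s)) t s ≤ slope φ t s := by
      filter_upwards [self_mem_nhdsWithin] with s hs
      have hst : s - t < 0 := sub_neg.2 hs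
      rw [slope_def_field, slope_def_field, ← sub_nonpos, div_sub_div_same]
      refine div_nonpos_iff.2 (Or.inl ⟨?_, ?_⟩)
      · have := hVge s
        linarith [hVt]
      · linarith
    have hd1 : deriv (fun s => g (x s)) t ≤
        ⟪x t - b, A (b - x t)⟫_ℝ + ⟪b - x t, F (x t)⟫_ℝ :=
      le_of_tendsto_of_tendsto htd hφtd hle
    have hq : 0 ≤ ⟪b - x t, A (b - x t)⟫_ℝ := aux_psd hKconv hF hmono (hxK t ht) hbK
    have h1 : ⟪x t - b, A (b - x t)⟫_ℝ ≤ 0 := by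
      rw [show x t - b = -(b - x t) from (neg_sub b (x t)).symm, inner_neg_left]
      linarith
    have h2 : ⟪b - x t, F (x t)⟫_ℝ = - g (x t) := by
      simp only [hgdef, inner_sub_left]
      rw [hmt]; ring
    linarith
  -- Gronwall step: t ↦ exp t * g (x t) is nonincreasing on [1, ∞)
  have hdyn' : ∀ᵐ t ∂(volume : Measure ℝ), t ∈ Set.Ici (0:ℝ) →
      ∃ b, (b ∈ K ∧ ∀ z ∈ K, ⟪b, F (x t)⟫_ℝ ≤ ⟪z, F (x t)⟫_ℝ) ∧
        HasDerivAt x (b - x t) t :=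
    (ae_restrict_iff' measurableSet_Ici).1 hdyn
  have hW : ∀ T : ℝ, 1 ≤ T → Real.exp T * g (x T) ≤ Real.exp 1 * g (x 1) := by
    intro T hT
    obtain ⟨Cx, hCx0, hCx⟩ := locallyLipschitz_exists_lip_Icc hlip 1 T
    set cl : ℝ → ℝ := fun s => max 1 (min T s) with hcldef
    have hclmem : ∀ s, cl s ∈ Set.Icc 1 T := fun s =>
      ⟨le_max_left _ _, max_le hT (min_le_left _ _)⟩
    have hcl_lip : ∀ s t : ℝ, |cl s - cl t| ≤ |s - t| := by
      intro s t
      simp only [hcldef]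
      calc |max 1 (min T s) - max 1 (min T t)|
          = |max (min T s) 1 - max (min T t) 1| := by rw [max_comm 1, max_comm 1]
        _ ≤ |min T s - min T t| := abs_max_sub_max_le_abs _ _ _
        _ ≤ max |T - T| |s - t| := abs_min_sub_min_le_max _ _ _ _
        _ = |s - t| := by simp
    set Wc : ℝ → ℝ := fun s => Real.exp (cl s) * g (x (cl s)) with hWcdef
    set CW : ℝ := Real.exp T * (Cg * Cx) + Gb * Real.exp T with hCWdef
    have hCW0 : 0 ≤ CW := by
      have := Real.exp_pos T
      simp only [hCWdef]; positivity
    have hxmem : ∀ s : ℝ, x (cl s) ∈ K := fun s =>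
      hxK _ (le_trans zero_le_one (hclmem s).1)
    have hWlip : LipschitzWith (Real.toNNReal CW) Wc := by
      refine LipschitzWith.of_dist_le_mul fun s t => ?_
      rw [Real.coe_toNNReal _ hCW0]
      set p := cl s
      set q := cl t
      have hp := hclmem s
      have hq := hclmem t
      have hid : Wc s - Wc t
          = Real.exp p * (g (x p) - g (x q)) + g (x q) * (Real.exp p - Real.exp q) := by
        simp only [hWcdef]; ring
      have hexp_bound : ∀ y ∈ Set.Icc (1:ℝ) T, ‖Real.exp y‖ ≤ Real.exp T := by
        intro y hy
        rw [Real.norm_eq_abs, abs_of_pos (Real.exp_pos y)]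
        exact Real.exp_le_exp.2 hy.2
      have hexp_lip : |Real.exp p - Real.exp q| ≤ Real.exp T * |p - q| := by
        have := Convex.norm_image_sub_le_of_norm_hasDerivWithin_le
          (f := Real.exp) (f' := Real.exp) (C := Real.exp T) (s := Set.Icc (1:ℝ) T)
          (fun y _ => (Real.hasDerivAt_exp y).hasDerivWithinAt)
          (fun y hy => hexp_bound y hy) (convex_Icc _ _) hq hp
        simpa [Real.norm_eq_abs, Real.dist_eq] using this
      have hgx : |g (x p) - g (x q)| ≤ Cg * (Cx * |p - q|) := by
        have h1 := hg_lip (x p) (hxmem s) (x q) (hxmem t)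
        have h2 : ‖x p - x q‖ = dist (x p) (x q) := (dist_eq_norm _ _).symm
        have h3 := hCx p hp q hq
        rw [Real.dist_eq] at h3
        calc |g (x p) - g (x q)| ≤ Cg * ‖x p - x q‖ := h1
          _ = Cg * dist (x p) (x q) := by rw [h2]
          _ ≤ Cg * (Cx * |p - q|) := mul_le_mul_of_nonneg_left h3 hCg0
      have hpq : |p - q| ≤ |s - t| := hcl_lip s t
      have hexp_p : Real.exp p ≤ Real.exp T := Real.exp_le_exp.2 hp.2
      have hgq : |g (x q)| ≤ Gb := hGb _ (hxmem t)
      rw [Real.dist_eq, Real.dist_eq, hid]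
      calc |Real.exp p * (g (x p) - g (x q)) + g (x q) * (Real.exp p - Real.exp q)|
          ≤ |Real.exp p * (g (x p) - g (x q))| + |g (x q) * (Real.exp p - Real.exp q)| :=
            abs_add_le _ _
        _ = Real.exp p * |g (x p) - g (x q)| + |g (x q)| * |Real.exp p - Real.exp q| := by
            rw [abs_mul, abs_mul, abs_of_pos (Real.exp_pos p)]
        _ ≤ Real.exp T * (Cg * (Cx * |p - q|)) + Gb * (Real.exp T * |p - q|) := by
            have e1 : Real.exp p * |g (x p) - g (x q)| ≤ Real.exp T * (Cg * (Cx * |p - q|)) :=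
              calc Real.exp p * |g (x p) - g (x q)|
                  ≤ Real.exp T * |g (x p) - g (x q)| :=
                    mul_le_mul_of_nonneg_right hexp_p (abs_nonneg _)
                _ ≤ Real.exp T * (Cg * (Cx * |p - q|)) :=
                    mul_le_mul_of_nonneg_left hgx (Real.exp_pos T).le
            have e2 : |g (x q)| * |Real.exp p - Real.exp q| ≤ Gb * (Real.exp T * |p - q|) :=
              calc |g (x q)| * |Real.exp p - Real.exp q|
                  ≤ Gb * |Real.exp p - Real.exp q| :=
                    mul_le_mul_of_nonneg_right hgq (abs_nonneg _)
                _ ≤ Gb * (Real.exp T * |p - q|) :=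
                    mul_le_mul_of_nonneg_left hexp_lip hGb0
            linarith
        _ = (Real.exp T * (Cg * Cx) + Gb * Real.exp T) * |p - q| := by ring
        _ ≤ (Real.exp T * (Cg * Cx) + Gb * Real.exp T) * |s - t| := by
            have hpos : (0:ℝ) ≤ Real.exp T * (Cg * Cx) + Gb * Real.exp T := by positivity
            exact mul_le_mul_of_nonneg_left hpq hpos
        _ = CW * |s - t| := by rw [hCWdef]
    have hd : ∀ᵐ t ∂(volume : Measure ℝ), t ∈ Set.Ioo (1:ℝ) T → deriv Wc t ≤ 0 := by
      filter_upwards [hdyn'] with t hdt htIoo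
      by_cases hdiff : DifferentiableAt ℝ Wc t
      · have hEq : Wc =ᶠ[nhds t] (fun s => Real.exp s * g (x s)) := by
          filter_upwards [Ioo_mem_nhds htIoo.1 htIoo.2] with s hs
          have hcls : cl s = s := by
            simp only [hcldef]
            rw [min_eq_right hs.2.le, max_eq_right hs.1.le]
          simp only [hWcdef, hcls]
        have hdiffW : DifferentiableAt ℝ (fun s => Real.exp s * g (x s)) t :=
          hEq.differentiableAt_iff.1 hdiff
        have hdiffV : DifferentiableAt ℝ (fun s => g (x s)) t := by
          have h1 : DifferentiableAt ℝ (fun s => Real.exp (-s) * (Real.exp s * g (x s))) t :=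
            ((Real.differentiable_exp.comp differentiable_neg).differentiableAt).mul hdiffW
          have h2 : (fun s => Real.exp (-s) * (Real.exp s * g (x s))) = fun s => g (x s) := by
            funext s
            rw [← mul_assoc, ← Real.exp_add]
            simp
          rwa [h2] at h1
        have hVd := hderiv_bound t (le_trans zero_le_one htIoo.1.le)
          (hdt (le_trans zero_le_one htIoo.1.le)) hdiffV
        have hWd : HasDerivAt (fun s => Real.exp s * g (x s))
            (Real.exp t * g (x t) + Real.exp t * deriv (fun s => g (x s)) t) t :=
          (Real.hasDerivAt_exp t).mul hdiffV.hasDerivAt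
        rw [hEq.deriv_eq, hWd.deriv]
        have := mul_le_mul_of_nonneg_left hVd (Real.exp_pos t).le
        linarith
      · rw [deriv_zero_of_not_differentiableAt hdiff]
    have := lipschitz_nonincreasing_of_deriv_ae_nonpos hWlip hT hd
    have hclT : cl T = T := by
      simp only [hcldef, min_self]
      exact max_eq_right hT
    have hcl1 : cl 1 = 1 := by
      simp only [hcldef]
      rw [min_eq_right hT, max_self]
    simpa only [hWcdef, hclT, hcl1] using this
  -- conclude: g (x t) → 0
  have hV0 : Filter.Tendsto (fun t => g (x t)) Filter.atTop (nhds 0) := by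
    have hub : ∀ᶠ t in Filter.atTop, g (x t) ≤ (Real.exp 1 * g (x 1)) * Real.exp (-t) := by
      filter_upwards [Filter.eventually_ge_atTop (1:ℝ)] with t ht
      have h1 := hW t ht
      have h2 : Real.exp (-t) * (Real.exp t * g (x t))
          ≤ Real.exp (-t) * (Real.exp 1 * g (x 1)) :=
        mul_le_mul_of_nonneg_left h1 (Real.exp_pos _).le
      calc g (x t) = Real.exp (-t) * (Real.exp t * g (x t)) := by
            rw [← mul_assoc, ← Real.exp_add]; simp
        _ ≤ Real.exp (-t) * (Real.exp 1 * g (x 1)) := h2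
        _ = (Real.exp 1 * g (x 1)) * Real.exp (-t) := by ring
    have hlb : ∀ᶠ t in Filter.atTop, (0:ℝ) ≤ g (x t) := by
      filter_upwards [Filter.eventually_ge_atTop (0:ℝ)] with t ht
      exact hgK _ (hxK t ht)
    have hup : Filter.Tendsto (fun t => (Real.exp 1 * g (x 1)) * Real.exp (-t))
        Filter.atTop (nhds 0) := by
      simpa using Real.tendsto_exp_neg_atTop_nhds_zero.const_mul (Real.exp 1 * g (x 1))
    exact tendsto_of_tendsto_of_tendsto_of_le_of_le' tendsto_const_nhds hup hlb hub
  -- final metric argument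
  rw [Metric.tendsto_atTop]
  intro ε hε
  by_cases hSe : (K ∩ {u | ε ≤ Metric.infDist u SOL}).Nonempty
  · have hScl : IsClosed {u : EuclideanSpace ℝ (Fin n) | ε ≤ Metric.infDist u SOL} :=
      isClosed_le continuous_const (Metric.continuous_infDist_pt SOL)
    obtain ⟨y₀, hy₀, hy₀min⟩ := (hKcpt.inter_right hScl).exists_isMinOn hSe
      (hg_cont.mono Set.inter_subset_left)
    have hρ : 0 < g y₀ := by
      rcases (hgK _ hy₀.1).lt_or_eq with h | h
      · exact h
      · exfalso
        have hmem : y₀ ∈ SOL := hg_sol _ hy₀.1 h.symm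
        have h1 : Metric.infDist y₀ SOL = 0 := Metric.infDist_zero_of_mem hmem
        have h2 : ε ≤ Metric.infDist y₀ SOL := hy₀.2
        linarith
    obtain ⟨N, hN⟩ := Filter.eventually_atTop.1 (hV0.eventually (gt_mem_nhds hρ))
    refine ⟨max N 0, fun t ht => ?_⟩
    have h1 : g (x t) < g y₀ := hN t (le_trans (le_max_left _ _) ht)
    have hxt : x t ∈ K := hxK t (le_trans (le_max_right _ _) ht)
    have hnot : ¬ (ε ≤ Metric.infDist (x t) SOL) := by
      intro hcon
      exact absurd (hy₀min ⟨hxt, hcon⟩) (not_le.2 h1)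
    rw [Real.dist_eq, sub_zero, abs_of_nonneg Metric.infDist_nonneg]
    exact not_le.1 hnot
  · refine ⟨0, fun t ht => ?_⟩
    have hxt : x t ∈ K := hxK t ht
    have hnot : ¬ (ε ≤ Metric.infDist (x t) SOL) := by
      intro hcon
      exact hSe ⟨x t, hxt, hcon⟩
    rw [Real.dist_eq, sub_zero, abs_of_nonneg Metric.infDist_nonneg]
    exact not_le.1 hnot
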